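/- Let L be a finite set of vectors in Fin k → Bool. Then L admits an HCO multiordering if and only if there exists a CO ordering B of L such that for every pair of columns x, y of B at adjacent positions that are inharmonious, the coordinatewise Boolean AND of x and y belongs to L. -/

import Mathlib

/-- A Boolean row vector has consecutive ones: any entry between two `true`s is `true`. -/
def RowCO {N : ℕ} (v : Fin N → Bool) : Prop :=
  ∀ p q j : Fin N, p ≤ j → j ≤ q → v p = true → v q = true → v j = true

/-- A Boolean matrix has the consecutive-ones property. -/
def CO {k N : ℕ} (M : Fin k → Fin N → Bool) : Prop := ∀ r, RowCO (M r)

/-- A Boolean matrix has the circular consecutive-ones property: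
in each row either the `true` entries or the `false` entries are consecutive. -/
def CCO {k N : ℕ} (M : Fin k → Fin N → Bool) : Prop :=
  ∀ r, RowCO (M r) ∨ RowCO (fun j => !(M r j))

/-- The column of `M` at position `j`. -/
def col {k N : ℕ} (M : Fin k → Fin N → Bool) (j : Fin N) : Fin k → Bool := fun r => M r j

/-- Two Boolean vectors are harmonious if one dominates the other pointwise. -/
def Harmonious {k : ℕ} (x y : Fin k → Bool) : Prop :=
  (∀ r, x r ≤ y r) ∨ (∀ r, y r ≤ x r)

/-- A harmonious consecutive-ones matrix: CO and every pair of adjacent columns is harmonious. -/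
def HCO {k N : ℕ} (M : Fin k → Fin N → Bool) : Prop :=
  CO M ∧ ∀ (j : ℕ) (h : j + 1 < N),
    Harmonious (col M ⟨j, Nat.lt_of_succ_lt h⟩) (col M ⟨j + 1, h⟩)

lemma bool_and_eq_left {a b : Bool} (h : a ≤ b) : (a && b) = a := by
  cases a <;> cases b <;> revert h <;> decide

lemma bool_and_eq_right {a b : Bool} (h : b ≤ a) : (a && b) = b := by
  cases a <;> cases b <;> revert h <;> decide

/-- Forward direction: from an HCO multiordering, extract the CO ordering of first
occurrences. -/
lemma hco_forward {k : ℕ} (L : Finset (Fin k → Bool))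
    (N : ℕ) (A : Fin k → Fin N → Bool) (hA : HCO A) (hrange : Set.range (col A) = ↑L) :
    (∃ (n : ℕ) (B : Fin k → Fin n → Bool), CO B ∧ Function.Injective (col B) ∧
      Set.range (col B) = ↑L ∧
      ∀ (j : ℕ) (hj : j + 1 < n),
        ¬ Harmonious (col B ⟨j, Nat.lt_of_succ_lt hj⟩) (col B ⟨j + 1, hj⟩) →
        (fun r => col B ⟨j, Nat.lt_of_succ_lt hj⟩ r && col B ⟨j + 1, hj⟩ r) ∈ L) := by
  classical
  obtain ⟨hCO, hH⟩ := hA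
  set cols : Fin N → (Fin k → Bool) := col A with hcolsdef
  -- the list of first-occurrence positions
  set l : List (Fin N) :=
    (List.finRange N).filter (fun j => decide (∀ i, i < j → cols i ≠ cols j)) with hldef
  have hsorted : l.Pairwise (· < ·) :=
    (List.pairwise_lt_finRange N).sublist (List.filter_sublist)
  have hmono : StrictMono l.get := fun a b hab => hsorted.rel_get_of_lt hab
  have hmeml : ∀ i : Fin N, i ∈ l ↔ ∀ i', i' < i → cols i' ≠ cols i := by
    intro i
    simp [hldef, List.mem_filter, List.mem_finRange]
  -- every column has a first occurrence in l
  have hfo : ∀ i : Fin N, ∃ i' : Fin N, i' ≤ i ∧ cols i' = cols i ∧ i' ∈ l := by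
    intro i
    set s : Finset (Fin N) := Finset.univ.filter (fun i' => cols i' = cols i) with hs
    have hne : s.Nonempty := ⟨i, by simp [hs]⟩
    have hminmem : s.min' hne ∈ s := s.min'_mem hne
    have hmineq : cols (s.min' hne) = cols i := by
      simpa [hs] using hminmem
    refine ⟨s.min' hne, s.min'_le i (by simp [hs]), hmineq, ?_⟩
    rw [hmeml]
    intro i' hlt heq
    have : i' ∈ s := by simp only [hs, Finset.mem_filter, Finset.mem_univ, true_and]; rw [heq]; exact hmineq
    exact absurd (s.min'_le i' this) (not_le.2 hlt)
  refine ⟨l.length, fun r j => A r (l.get j), ?_, ?_, ?_, ?_⟩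
  · -- CO
    intro r p q j hpj hjq hp hq
    exact hCO r (l.get p) (l.get q) (l.get j) (hmono.monotone hpj) (hmono.monotone hjq) hp hq
  · -- injective
    intro j1 j2 h
    by_contra hne
    have key : ∀ a b : Fin l.length, a < b → cols (l.get a) = cols (l.get b) → False := by
      intro a b hab heq
      have hb := (hmeml (l.get b)).1 (List.get_mem l b)
      exact hb (l.get a) (hmono hab) heq
    have hcols12 : cols (l.get j1) = cols (l.get j2) := h
    rcases lt_trichotomy j1 j2 with hlt | heq | hlt
    · exact key j1 j2 hlt hcols12
    · exact hne heq
    · exact key j2 j1 hlt hcols12.symm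
  · -- range
    rw [← hrange]
    ext c
    constructor
    · rintro ⟨j, rfl⟩
      exact ⟨l.get j, rfl⟩
    · rintro ⟨i, rfl⟩
      obtain ⟨i', _, heq, hmem⟩ := hfo i
      obtain ⟨j, hj⟩ := List.mem_iff_get.1 hmem
      exact ⟨j, by rw [show col (fun r j => A r (l.get j)) j = cols (l.get j) from rfl, hj, heq]⟩
  · -- the AND condition
    intro j hj hnH
    set p : Fin N := l.get ⟨j, Nat.lt_of_succ_lt hj⟩ with hpdef
    set q : Fin N := l.get ⟨j + 1, hj⟩ with hqdef
    have hpq : p < q := hmono (by simp [Fin.lt_def])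
    set x : Fin k → Bool := cols p with hxdef
    set y : Fin k → Bool := cols q with hydef
    have hcolx : col (fun r j => A r (l.get j)) ⟨j, Nat.lt_of_succ_lt hj⟩ = x := rfl
    have hcoly : col (fun r j => A r (l.get j)) ⟨j + 1, hj⟩ = y := rfl
    rw [hcolx, hcoly] at hnH ⊢
    have hnxy : ¬ ∀ r, x r ≤ y r := fun h => hnH (Or.inl h)
    have hnyx : ¬ ∀ r, y r ≤ x r := fun h => hnH (Or.inr h)
    -- no first occurrence strictly between p and q
    have hgap : ∀ i : Fin N, i ∈ l → i ≤ p ∨ q ≤ i := by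
      intro i hi
      obtain ⟨j', hj'⟩ := List.mem_iff_get.1 hi
      rcases le_or_gt j'.1 j with h | h
      · left; rw [← hj', hpdef]
        exact hmono.monotone (by simpa [Fin.le_def] using h)
      · right; rw [← hj', hqdef]
        exact hmono.monotone (by simpa [Fin.le_def] using h)
    -- (a) every column strictly between p and q is ≤ x pointwise
    have ha : ∀ m : Fin N, p < m → m < q → ∀ r, cols m r ≤ x r := by
      intro m hpm hmq r
      obtain ⟨m', hm'le, hm'eq, hm'mem⟩ := hfo m
      have hm'p : m' ≤ p := by
        rcases hgap m' hm'mem with h | h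
        · exact h
        · exact absurd (lt_of_le_of_lt (le_trans h hm'le) hmq) (lt_irrefl q)
      rw [Bool.le_iff_imp]
      intro hm
      have hm' : cols m' r = true := by rw [hm'eq]; exact hm
      exact hCO r m' m p hm'p (le_of_lt hpm) hm' hm
    -- (b) x && y ≤ every column between p and q
    have hb : ∀ m : Fin N, p ≤ m → m ≤ q → ∀ r, (x r && y r) ≤ cols m r := by
      intro m h1 h2 r
      rw [Bool.le_iff_imp]
      intro h
      rw [Bool.and_eq_true] at h
      exact hCO r p q m h1 h2 h.1 h.2
    -- (c) minimal position in [p,q] whose column is ≤ y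
    set s : Finset (Fin N) :=
      Finset.univ.filter (fun m => p ≤ m ∧ m ≤ q ∧ ∀ r, cols m r ≤ y r) with hsdef
    have hne : s.Nonempty := ⟨q, by simp [hsdef, le_of_lt hpq]; exact fun r => le_rfl⟩
    set m : Fin N := s.min' hne with hmdef
    have hmmem : m ∈ s := s.min'_mem hne
    have hmprop : p ≤ m ∧ m ≤ q ∧ ∀ r, cols m r ≤ y r := by
      simpa [hsdef] using hmmem
    have hpm : p < m := by
      rcases lt_or_eq_of_le hmprop.1 with h | h
      · exact h
      · exact ((hnxy fun r => by rw [hxdef, h]; exact hmprop.2.2 r)).elim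
    rcases lt_or_eq_of_le hmprop.2.1 with hmq | hmq
    · -- m < q : cols m = x && y
      have heq : cols m = fun r => x r && y r := by
        funext r
        exact le_antisymm
          (by
            rw [Bool.le_iff_imp]
            intro h
            rw [Bool.and_eq_true]
            exact ⟨Bool.le_iff_imp.1 (ha m hpm hmq r) h,
              Bool.le_iff_imp.1 (hmprop.2.2 r) h⟩)
          (hb m hmprop.1 hmprop.2.1 r)
      have : cols m ∈ Set.range cols := ⟨m, rfl⟩
      rw [hrange] at this
      rw [← heq]
      exact this
    · -- m = q : contradiction with inharmoniousness
      exfalso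
      have hm1lt : m.1 - 1 + 1 < N := by
        have := m.2
        have : (1:ℕ) ≤ m.1 := by
          have := hpm
          rw [Fin.lt_def] at this
          omega
        omega
      set m₁ : Fin N := ⟨m.1 - 1, Nat.lt_of_succ_lt hm1lt⟩ with hm₁def
      have hm₁m : m₁ < m := by rw [Fin.lt_def]; simp [hm₁def]; omega
      have hpm₁ : p ≤ m₁ := by
        rw [Fin.le_def]
        have := hpm; rw [Fin.lt_def] at this
        simp [hm₁def]; omega
      have hmeqfin : (⟨m.1 - 1 + 1, hm1lt⟩ : Fin N) = m := by
        apply Fin.ext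
        have := hpm; rw [Fin.lt_def] at this
        simp; omega
      have hharm := hH (m.1 - 1) hm1lt
      rw [hmeqfin] at hharm
      have hym₁ : ∀ r, y r ≤ cols m₁ r := by
        rcases hharm with h | h
        · -- cols m₁ ≤ cols m ≤ y : contradicts minimality of m
          exfalso
          have : m₁ ∈ s := by
            simp only [hsdef, Finset.mem_filter, Finset.mem_univ, true_and]
            exact ⟨hpm₁, le_trans (le_of_lt hm₁m) hmprop.2.1,
              fun r => le_trans (h r) (hmprop.2.2 r)⟩
          exact absurd (s.min'_le m₁ this) (not_le.2 hm₁m)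
        · intro r
          rw [hydef, ← hmq]
          exact h r
      rcases lt_or_eq_of_le hpm₁ with h | h
      · -- p < m₁ < q : cols m₁ ≤ x, so y ≤ x, contradiction
        have hm₁q : m₁ < q := hmq ▸ hm₁m
        exact hnyx fun r => le_trans (hym₁ r) (ha m₁ h hm₁q r)
      · -- m₁ = p : y ≤ x directly
        exact hnyx fun r => by rw [hxdef, h]; exact hym₁ r

theorem HCO_multiordering_iff_CO_ordering_with_ands (k : ℕ) (L : Finset (Fin k → Bool)) :
    (∃ (N : ℕ) (A : Fin k → Fin N → Bool), HCO A ∧ Set.range (col A) = ↑L) ↔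
    (∃ (n : ℕ) (B : Fin k → Fin n → Bool), CO B ∧ Function.Injective (col B) ∧
      Set.range (col B) = ↑L ∧
      ∀ (j : ℕ) (hj : j + 1 < n),
        ¬ Harmonious (col B ⟨j, Nat.lt_of_succ_lt hj⟩) (col B ⟨j + 1, hj⟩) →
        (fun r => col B ⟨j, Nat.lt_of_succ_lt hj⟩ r && col B ⟨j + 1, hj⟩ r) ∈ L) := by
  constructor
  · rintro ⟨N, A, hA, hrange⟩
    exact hco_forward L N A hA hrange
  · rintro ⟨n, B, hCO, hinj, hrange, hand⟩
    rcases n with _ | m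
    · -- n = 0 : L is empty
      refine ⟨0, fun _ j => j.elim0, ⟨fun r p => p.elim0, fun j h => by omega⟩, ?_⟩
      rw [← hrange]
      ext c
      constructor
      · rintro ⟨i, _⟩; exact i.elim0
      · rintro ⟨i, _⟩; exact i.elim0
    · -- n = m + 1 : interleave with ANDs
      set A : Fin k → Fin (2 * m + 1) → Bool :=
        fun r i => B r ⟨i.1 / 2, by have := i.2; omega⟩ &&
          B r ⟨(i.1 + 1) / 2, by have := i.2; omega⟩ with hAdef
      have hBm : ∀ (r : Fin k) (u v : ℕ) (hu : u < m + 1) (hv : v < m + 1), u = v →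
          B r ⟨u, hu⟩ = B r ⟨v, hv⟩ := by
        intro r u v hu hv h
        subst h; rfl
      refine ⟨2 * m + 1, A, ⟨?_, ?_⟩, ?_⟩
      · -- CO
        intro r p q j hpj hjq hp hq
        rw [Fin.le_def] at hpj hjq
        simp only [hAdef, Bool.and_eq_true] at hp hq ⊢
        have h1 : B r ⟨p.1 / 2, by have := p.2; omega⟩ = true := hp.1
        have h2 : B r ⟨(q.1 + 1) / 2, by have := q.2; omega⟩ = true := hq.2
        constructor
        · exact hCO r _ _ ⟨j.1 / 2, by have := j.2; omega⟩
            (by rw [Fin.le_def]; simp; omega) (by rw [Fin.le_def]; simp; omega) h1 h2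
        · exact hCO r _ _ ⟨(j.1 + 1) / 2, by have := j.2; omega⟩
            (by rw [Fin.le_def]; simp; omega) (by rw [Fin.le_def]; simp; omega) h1 h2
      · -- harmonious adjacent
        intro i h
        rcases Nat.even_or_odd i with he | ho
        · -- i even : col (i+1) ≤ col i
          right
          intro r
          have he2 : i % 2 = 0 := Nat.even_iff.1 he
          show (B r ⟨(i + 1) / 2, _⟩ && B r ⟨(i + 1 + 1) / 2, _⟩) ≤
            (B r ⟨i / 2, _⟩ && B r ⟨(i + 1) / 2, _⟩)
          rw [hBm r ((i+1)/2) (i/2) (by omega) (by omega) (by omega),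
            hBm r (i/2) ((i+1)/2) (by omega) (by omega) (by omega), Bool.and_self]
          exact Bool.and_le_left _ _
        · -- i odd : col i ≤ col (i+1)
          left
          intro r
          have ho2 : i % 2 = 1 := Nat.odd_iff.1 ho
          show (B r ⟨i / 2, _⟩ && B r ⟨(i + 1) / 2, _⟩) ≤
            (B r ⟨(i + 1) / 2, _⟩ && B r ⟨(i + 1 + 1) / 2, _⟩)
          rw [hBm r ((i+1+1)/2) ((i+1)/2) (by omega) (by omega) (by omega), Bool.and_self]
          exact Bool.and_le_right _ _
      · -- range
        ext c
        constructor
        · rintro ⟨i, rfl⟩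
          have hcoli : col A i = fun r => B r ⟨i.1 / 2, by have := i.2; omega⟩ &&
              B r ⟨(i.1 + 1) / 2, by have := i.2; omega⟩ := rfl
          rcases Nat.even_or_odd i.1 with he | ho
          · -- even column : a column of B
            have he2 : i.1 % 2 = 0 := Nat.even_iff.1 he
            have : col A i = col B ⟨i.1 / 2, by have := i.2; omega⟩ := by
              rw [hcoli]
              funext r
              rw [hBm r ((i.1+1)/2) (i.1/2) (by have := i.2; omega) (by have := i.2; omega)
                (by omega), Bool.and_self]
              rfl
            rw [this, ← hrange]
            exact ⟨_, rfl⟩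
          · -- odd column : an AND of adjacent columns of B
            have ho2 : i.1 % 2 = 1 := Nat.odd_iff.1 ho
            have hj : i.1 / 2 + 1 < m + 1 := by have := i.2; omega
            have hcoli2 : col A i = fun r =>
                col B ⟨i.1 / 2, Nat.lt_of_succ_lt hj⟩ r && col B ⟨i.1 / 2 + 1, hj⟩ r := by
              rw [hcoli]
              funext r
              rw [hBm r ((i.1+1)/2) (i.1/2 + 1) (by have := i.2; omega) hj (by omega)]
              rfl
            by_cases hharm : Harmonious (col B ⟨i.1 / 2, Nat.lt_of_succ_lt hj⟩)
                (col B ⟨i.1 / 2 + 1, hj⟩)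
            · rcases hharm with hle | hle
              · have : col A i = col B ⟨i.1 / 2, Nat.lt_of_succ_lt hj⟩ := by
                  rw [hcoli2]; funext r; exact bool_and_eq_left (hle r)
                rw [this, ← hrange]; exact ⟨_, rfl⟩
              · have : col A i = col B ⟨i.1 / 2 + 1, hj⟩ := by
                  rw [hcoli2]; funext r; exact bool_and_eq_right (hle r)
                rw [this, ← hrange]; exact ⟨_, rfl⟩
            · rw [hcoli2]
              exact_mod_cast hand (i.1 / 2) hj hharm
        · rintro hc
          rw [← hrange] at hc
          obtain ⟨jb, rfl⟩ := hc
          refine ⟨⟨2 * jb.1, by have := jb.2; omega⟩, ?_⟩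
          funext r
          show (B r ⟨2 * jb.1 / 2, _⟩ && B r ⟨(2 * jb.1 + 1) / 2, _⟩) = B r jb
          rw [hBm r (2 * jb.1 / 2) jb.1 (by have := jb.2; omega) jb.2 (by omega),
            hBm r ((2 * jb.1 + 1) / 2) jb.1 (by have := jb.2; omega) jb.2 (by omega),
            Bool.and_self]
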